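/- Let m ≥ 1 be an integer and let β > α > 0 be real numbers. Define u : ℝ^m → ℝ by u(x) = ‖x‖^{−α}·sin(‖x‖^{β}). Then there exists δ ∈ (0,1) such that for every x ∈ ℝ^m with 0 < ‖x‖ ≤ δ, u is differentiable at x and ‖fderiv ℝ u x‖ ≥ ((β − α)/2)·‖x‖^{β−α−1}. -/

import Mathlib

/-- For the oscillating function `u(x) = ‖x‖^{-α} sin(‖x‖^β)` on `ℝᵐ` with
`β > α > 0`, there is `δ ∈ (0,1)` such that for every `x` with `0 < ‖x‖ ≤ δ`, `u` is
differentiable at `x` and `‖Du(x)‖ ≥ ((β - α)/2) ‖x‖^{β - α - 1}`. -/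
theorem oscillating_fderiv_lower_bound (m : ℕ) (hm : 1 ≤ m) (α β : ℝ)
    (hα : 0 < α) (hβ : α < β) :
    ∃ δ : ℝ, 0 < δ ∧ δ < 1 ∧
      ∀ x : EuclideanSpace ℝ (Fin m), 0 < ‖x‖ → ‖x‖ ≤ δ →
        DifferentiableAt ℝ
            (fun y : EuclideanSpace ℝ (Fin m) => ‖y‖ ^ (-α) * Real.sin (‖y‖ ^ β)) x ∧
          ‖fderiv ℝ
              (fun y : EuclideanSpace ℝ (Fin m) => ‖y‖ ^ (-α) * Real.sin (‖y‖ ^ β)) x‖ ≥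
            (β - α) / 2 * ‖x‖ ^ (β - α - 1) := by
  have hβ0 : 0 < β := hα.trans hβ
  set ε : ℝ := (β - α) / β with hε_def
  have hε0 : 0 < ε := div_pos (by linarith) hβ0
  have hε1 : ε < 1 := by
    rw [div_lt_one hβ0]; linarith
  refine ⟨min (1/2) (ε ^ (1 / (2 * β))), lt_min (by norm_num)
    (Real.rpow_pos_of_pos hε0 _), (min_le_left _ _).trans_lt (by norm_num), ?_⟩
  intro x hx hxδ
  have hxne : x ≠ 0 := by
    intro h; rw [h] at hx; simp at hx
  haveI : Nontrivial (EuclideanSpace ℝ (Fin m)) := nontrivial_of_ne x 0 hxne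
  set r : ℝ := ‖x‖ with hr_def
  have hr : 0 < r := hx
  -- bound on r^(2β)
  have hr2β : r ^ (2 * β) ≤ ε := by
    have h1 : r ≤ ε ^ (1 / (2 * β)) := hxδ.trans (min_le_right _ _)
    have h2 : r ^ (2 * β) ≤ (ε ^ (1 / (2 * β))) ^ (2 * β) :=
      Real.rpow_le_rpow hr.le h1 (by positivity)
    rwa [← Real.rpow_mul hε0.le, one_div,
      inv_mul_cancel₀ (by positivity : (2*β) ≠ 0), Real.rpow_one] at h2
  -- cos bound
  have hcos : 1 - ε / 2 ≤ Real.cos (r ^ β) := by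
    have h1 : 1 - (r ^ β) ^ 2 / 2 ≤ Real.cos (r ^ β) := Real.one_sub_sq_div_two_le_cos
    have h2 : (r ^ β) ^ 2 = r ^ (2 * β) := by
      rw [← Real.rpow_natCast (r ^ β) 2, ← Real.rpow_mul hr.le]
      ring_nf
    rw [h2] at h1
    linarith
  -- derivative of norm
  have hn : DifferentiableAt ℝ (fun y : EuclideanSpace ℝ (Fin m) => ‖y‖) x :=
    ((contDiffAt_norm (n := 1) ℝ hxne).differentiableAt one_ne_zero : )
  set N := fderiv ℝ (fun y : EuclideanSpace ℝ (Fin m) => ‖y‖) x with hN_def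
  have hNnorm : ‖N‖ = 1 := norm_fderiv_norm hn
  have hN : HasFDerivAt (fun y : EuclideanSpace ℝ (Fin m) => ‖y‖) N x := hn.hasFDerivAt
  -- derivative of the radial profile
  have h1 : HasDerivAt (fun s : ℝ => s ^ (-α)) (-α * r ^ (-α - 1)) r := by
    simpa using Real.hasDerivAt_rpow_const (p := -α) (Or.inl hr.ne')
  have h2 : HasDerivAt (fun s : ℝ => Real.sin (s ^ β))
      (Real.cos (r ^ β) * (β * r ^ (β - 1))) r :=
    (Real.hasDerivAt_rpow_const (p := β) (Or.inl hr.ne')).sin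
  set g' : ℝ := -α * r ^ (-α - 1) * Real.sin (r ^ β) +
      r ^ (-α) * (Real.cos (r ^ β) * (β * r ^ (β - 1))) with hg'_def
  have hg : HasDerivAt (fun s : ℝ => s ^ (-α) * Real.sin (s ^ β)) g' r := h1.mul h2
  have hu : HasFDerivAt
      (fun y : EuclideanSpace ℝ (Fin m) => ‖y‖ ^ (-α) * Real.sin (‖y‖ ^ β)) (g' • N) x :=
    by rw [hr_def] at hg; exact hg.comp_hasFDerivAt x hN
  refine ⟨hu.differentiableAt, ?_⟩
  rw [hu.fderiv, norm_smul, hNnorm, mul_one, Real.norm_eq_abs]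
  -- now the lower bound on |g'|
  have hrpow_pos : ∀ t : ℝ, 0 < r ^ t := fun t => Real.rpow_pos_of_pos hr t
  have hmul1 : r ^ (-α) * r ^ (β - 1) = r ^ (β - α - 1) := by
    rw [← Real.rpow_add hr]; ring_nf
  have hmul2 : r ^ (-α - 1) * r ^ β = r ^ (β - α - 1) := by
    rw [← Real.rpow_add hr]; ring_nf
  have hsin : |Real.sin (r ^ β)| ≤ r ^ β := by
    have := Real.abs_sin_le_abs (x := r ^ β)
    rwa [abs_of_pos (hrpow_pos β)] at this
  have habsA : |(-α * r ^ (-α - 1) * Real.sin (r ^ β))| ≤ α * r ^ (β - α - 1) := by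
    rw [abs_mul, abs_mul, abs_neg, abs_of_pos hα, abs_of_pos (hrpow_pos _)]
    calc α * r ^ (-α - 1) * |Real.sin (r ^ β)|
        ≤ α * r ^ (-α - 1) * r ^ β := by
          apply mul_le_mul_of_nonneg_left hsin (by positivity)
      _ = α * r ^ (β - α - 1) := by rw [mul_assoc, hmul2]
  have hB : r ^ (-α) * (Real.cos (r ^ β) * (β * r ^ (β - 1)))
      = β * Real.cos (r ^ β) * r ^ (β - α - 1) := by
    rw [← hmul1]; ring
  have hBge : β * Real.cos (r ^ β) * r ^ (β - α - 1)
      ≥ β * (1 - ε / 2) * r ^ (β - α - 1) := by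
    apply mul_le_mul_of_nonneg_right _ (hrpow_pos _).le
    exact mul_le_mul_of_nonneg_left hcos hβ0.le
  have hεβ : β * ε = β - α := by
    rw [hε_def]; field_simp
  have hc2 : β * (1 - ε / 2) - α = (β - α) / 2 := by
    linear_combination (-1/2 : ℝ) * hεβ
  have key : (β - α) / 2 * r ^ (β - α - 1)
      ≤ β * Real.cos (r ^ β) * r ^ (β - α - 1) - α * r ^ (β - α - 1) := by
    have heq : β * (1 - ε / 2) * r ^ (β - α - 1) - α * r ^ (β - α - 1)
        = (β - α) / 2 * r ^ (β - α - 1) := by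
      rw [← sub_mul, hc2]
    linarith [hBge]
  have habs : |g'| ≥ r ^ (-α) * (Real.cos (r ^ β) * (β * r ^ (β - 1)))
      - |(-α * r ^ (-α - 1) * Real.sin (r ^ β))| := by
    have h3 : |r ^ (-α) * (Real.cos (r ^ β) * (β * r ^ (β - 1)))| ≤
        |g'| + |(-α * r ^ (-α - 1) * Real.sin (r ^ β))| := by
      have : r ^ (-α) * (Real.cos (r ^ β) * (β * r ^ (β - 1)))
          = g' + -(-α * r ^ (-α - 1) * Real.sin (r ^ β)) := by
        rw [hg'_def]; ring
      rw [this]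
      calc |g' + -(-α * r ^ (-α - 1) * Real.sin (r ^ β))|
          ≤ |g'| + |(-(-α * r ^ (-α - 1) * Real.sin (r ^ β)))| := abs_add_le _ _
        _ = |g'| + |(-α * r ^ (-α - 1) * Real.sin (r ^ β))| := by rw [abs_neg]
    have h4 := le_abs_self (r ^ (-α) * (Real.cos (r ^ β) * (β * r ^ (β - 1))))
    linarith
  rw [hB] at habs
  linarith [habsA, key, habs]
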